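/- Let U ⊆ ℂ be open, let g : U → ℂ and φ : U → ℂ be holomorphic and nowhere zero on U, and let F = (F₁,F₂,F₃) : U → ℂ³ be holomorphic with F₁' = (1/2)(1/g − g)·φ, F₂' = (i/2)(1/g + g)·φ and F₃' = φ on U, and set X := Re F : U → ℝ³. Then at every point of U the cross product of the partial derivatives satisfies (∂X/∂x) × (∂X/∂y) = Λ²·N, where Λ := (1/2)(|g| + 1/|g|)·|φ| and N := (2 Re g, 2 Im g, |g|² − 1)/(1 + |g|²). In particular the unit normal vector of the immersion X equals the inverse stereographic projection N of g, which lies on the unit sphere of ℝ³. -/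

import Mathlib

set_option maxHeartbeats 1000000

open Complex

/-- Partial derivative in the `x`-direction (direction `1 ∈ ℂ`) of a real-valued
function on `ℂ ≅ ℝ²`. -/
noncomputable def pdx (f : ℂ → ℝ) (z : ℂ) : ℝ := fderiv ℝ f z 1

/-- Partial derivative in the `y`-direction (direction `i ∈ ℂ`). -/
noncomputable def pdy (f : ℂ → ℝ) (z : ℂ) : ℝ := fderiv ℝ f z Complex.I

lemma pdx_of_hasDerivAt {f : ℂ → ℂ} {c z : ℂ} (h : HasDerivAt f c z) :
    pdx (fun w => (f w).re) z = c.re := by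
  have h1 : HasFDerivAt (fun w => (f w).re)
      (Complex.reCLM.comp
        (((ContinuousLinearMap.smulRight (1 : ℂ →L[ℂ] ℂ) c)).restrictScalars ℝ)) z :=
    Complex.reCLM.hasFDerivAt.comp z (h.hasFDerivAt.restrictScalars ℝ)
  simp [pdx, h1.fderiv]

lemma pdy_of_hasDerivAt {f : ℂ → ℂ} {c z : ℂ} (h : HasDerivAt f c z) :
    pdy (fun w => (f w).re) z = -c.im := by
  have h1 : HasFDerivAt (fun w => (f w).re)
      (Complex.reCLM.comp
        (((ContinuousLinearMap.smulRight (1 : ℂ →L[ℂ] ℂ) c)).restrictScalars ℝ)) z :=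
    Complex.reCLM.hasFDerivAt.comp z (h.hasFDerivAt.restrictScalars ℝ)
  simp [pdy, h1.fderiv]

lemma vec3_ext {x y z x' y' z' : ℝ} (h0 : x = x') (h1 : y = y') (h2 : z = z') :
    ![x, y, z] = ![x', y', z'] := by rw [h0, h1, h2]

/-- For the Weierstrass representation `X = Re F` with data `(g, φ dz)`, the cross
product `(∂X/∂x) × (∂X/∂y)` equals `Λ² N`, where `Λ = (1/2)(|g| + 1/|g|)|φ|` and
`N = (2 Re g, 2 Im g, |g|² − 1)/(1 + |g|²)` is the inverse stereographic projection of
`g`; in particular the unit normal of `X` is `N`, which lies on the unit sphere. -/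
theorem weierstrass_normal_is_inverse_stereographic_projection_of_gauss_map
    (U : Set ℂ) (hU : IsOpen U) (g φ : ℂ → ℂ)
    (hg : DifferentiableOn ℂ g U) (hφ : DifferentiableOn ℂ φ U)
    (hg0 : ∀ z ∈ U, g z ≠ 0) (hφ0 : ∀ z ∈ U, φ z ≠ 0)
    (F : Fin 3 → ℂ → ℂ)
    (hF0 : ∀ z ∈ U, HasDerivAt (F 0) ((1 / 2) * (1 / g z - g z) * φ z) z)
    (hF1 : ∀ z ∈ U, HasDerivAt (F 1) ((Complex.I / 2) * (1 / g z + g z) * φ z) z)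
    (hF2 : ∀ z ∈ U, HasDerivAt (F 2) (φ z) z) :
    ∀ z ∈ U,
      crossProduct (fun i => pdx (fun w => (F i w).re) z)
          (fun i => pdy (fun w => (F i w).re) z)
        = (((1 / 2) * (‖g z‖ + 1 / ‖g z‖) * ‖φ z‖) ^ 2)
            • ![2 * (g z).re / (1 + ‖g z‖ ^ 2),
                2 * (g z).im / (1 + ‖g z‖ ^ 2),
                (‖g z‖ ^ 2 - 1) / (1 + ‖g z‖ ^ 2)] ∧
      (2 * (g z).re / (1 + ‖g z‖ ^ 2)) ^ 2
          + (2 * (g z).im / (1 + ‖g z‖ ^ 2)) ^ 2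
          + ((‖g z‖ ^ 2 - 1) / (1 + ‖g z‖ ^ 2)) ^ 2 = 1 := by
  intro z hz
  have hgz : g z ≠ 0 := hg0 z hz
  have hA : ‖g z‖ ≠ 0 := by simpa using hgz
  have hs : (g z).re ^ 2 + (g z).im ^ 2 ≠ 0 := by
    have := Complex.normSq_pos.mpr hgz
    rw [Complex.normSq_apply] at this
    nlinarith
  have hs' : (g z).im ^ 2 + (g z).re ^ 2 ≠ 0 := by rw [add_comm]; exact hs
  have hs2 : (g z).re * (g z).re + (g z).im * (g z).im ≠ 0 := by
    intro h; exact hs (by nlinarith)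
  have hs3 : (g z).im * (g z).im + (g z).re * (g z).re ≠ 0 := by
    intro h; exact hs (by nlinarith)
  have habs2 : ‖g z‖ ^ 2 = (g z).re ^ 2 + (g z).im ^ 2 := by
    rw [Complex.sq_norm, Complex.normSq_apply]; ring
  have hden : (1 : ℝ) + ((g z).re ^ 2 + (g z).im ^ 2) ≠ 0 := by positivity
  constructor
  · have hΛ : ((1 / 2 : ℝ) * (‖g z‖ + 1 / ‖g z‖)
          * ‖φ z‖) ^ 2
        = (1 / 4) * ((((g z).re ^ 2 + (g z).im ^ 2) + 2 + 1 / ((g z).re ^ 2 + (g z).im ^ 2)))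
          * ((φ z).re ^ 2 + (φ z).im ^ 2) := by
      have h2 : ‖φ z‖ ^ 2 = (φ z).re ^ 2 + (φ z).im ^ 2 := by
        rw [Complex.sq_norm, Complex.normSq_apply]; ring
      have key : ((1 / 2 : ℝ) * (‖g z‖ + 1 / ‖g z‖)
            * ‖φ z‖) ^ 2
          = (1 / 4) * (‖g z‖ ^ 2 + 2 + 1 / ‖g z‖ ^ 2)
            * ‖φ z‖ ^ 2 := by
        field_simp
        ring
      rw [key, habs2, h2]
    have e0x := pdx_of_hasDerivAt (hF0 z hz)
    have e1x := pdx_of_hasDerivAt (hF1 z hz)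
    have e2x := pdx_of_hasDerivAt (hF2 z hz)
    have e0y := pdy_of_hasDerivAt (hF0 z hz)
    have e1y := pdy_of_hasDerivAt (hF1 z hz)
    have e2y := pdy_of_hasDerivAt (hF2 z hz)
    rw [cross_apply]
    simp only [Matrix.smul_cons, Matrix.smul_empty, smul_eq_mul]
    refine vec3_ext ?_ ?_ ?_ <;>
    · simp only [e0x, e1x, e2x, e0y, e1y, e2y]
      rw [hΛ, habs2]
      simp only [Complex.mul_re, Complex.mul_im, Complex.div_re, Complex.div_im,
        Complex.normSq_apply, Complex.add_re, Complex.add_im, Complex.sub_re, Complex.sub_im,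
        Complex.one_re, Complex.one_im, Complex.I_re, Complex.I_im]
      norm_num
      field_simp
      ring
  · rw [habs2]
    field_simp
    ring
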